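/- Let p > 3 be a prime and let K be the algebraic closure of 𝔽_p. If E and E' are elliptic curves over K with j(E') = j(E)^p and E is supersingular, then E' is supersingular. Hence the Frobenius map j ↦ j^p is an involution on the set of supersingular j-invariants. -/

import Mathlib

open WeierstrassCurve

open Classical in
/-- An elliptic curve over the algebraic closure of `𝔽_p` is supersingular if its group of
points contains no point of additive order `p`. -/
def Supersingular (p : ℕ) [Fact p.Prime]
    (E : WeierstrassCurve (AlgebraicClosure (ZMod p))) [E.IsElliptic] : Prop :=
  ∀ P : E.toAffine.Point, addOrderOf P ≠ p


open WeierstrassCurve Polynomial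

namespace WeierstrassCurve.Affine

variable {F : Type*} [Field F] (W : WeierstrassCurve.Affine F) (C : WeierstrassCurve.VariableChange F)

noncomputable def vvx (x : F) : F := (C.u⁻¹ : Fˣ) ^ 2 * (x - C.r)

noncomputable def vvy (x y : F) : F := (C.u⁻¹ : Fˣ) ^ 3 * (y - C.s * x + C.r * C.s - C.t)

lemma vvx_eq_iff {x₁ x₂ : F} : vvx C x₁ = vvx C x₂ ↔ x₁ = x₂ := by
  unfold vvx
  rw [mul_right_inj' (pow_ne_zero 2 C.u⁻¹.ne_zero), sub_left_inj]

lemma vvy_eq_iff {x y₁ y₂ : F} : vvy C x y₁ = vvy C x y₂ ↔ y₁ = y₂ := by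
  unfold vvy
  rw [mul_right_inj' (pow_ne_zero 3 C.u⁻¹.ne_zero)]
  constructor
  · intro h; linear_combination h
  · intro h; rw [h]

variable {x y : F}

lemma evalEval_polynomial_vc (x y : F) :
    (C • W).toAffine.polynomial.evalEval (vvx C x) (vvy C x y) =
      (C.u⁻¹ : Fˣ) ^ 6 * W.polynomial.evalEval x y := by
  simp only [evalEval_polynomial, vvx, vvy, variableChange_a₁, variableChange_a₂,
    variableChange_a₃, variableChange_a₄, variableChange_a₆]
  ring1

lemma evalEval_polynomialX_vc (x y : F) :
    (C • W).toAffine.polynomialX.evalEval (vvx C x) (vvy C x y) =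
      (C.u⁻¹ : Fˣ) ^ 4 * (W.polynomialX.evalEval x y + C.s * W.polynomialY.evalEval x y) := by
  simp only [evalEval_polynomialX, evalEval_polynomialY, vvx, vvy, variableChange_a₁,
    variableChange_a₂, variableChange_a₃, variableChange_a₄]
  ring1

lemma evalEval_polynomialY_vc (x y : F) :
    (C • W).toAffine.polynomialY.evalEval (vvx C x) (vvy C x y) =
      (C.u⁻¹ : Fˣ) ^ 3 * W.polynomialY.evalEval x y := by
  simp only [evalEval_polynomialY, vvx, vvy, variableChange_a₁, variableChange_a₃]
  ring1

lemma negY_vc (x y : F) :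
    (C • W).toAffine.negY (vvx C x) (vvy C x y) = vvy C x (W.negY x y) := by
  simp only [negY, vvx, vvy, variableChange_a₁, variableChange_a₃]
  ring1

lemma addX_vc (x₁ x₂ L : F) :
    (C • W).toAffine.addX (vvx C x₁) (vvx C x₂) ((C.u⁻¹ : Fˣ) * (L - C.s)) =
      vvx C (W.addX x₁ x₂ L) := by
  simp only [addX, vvx, variableChange_a₁, variableChange_a₂]
  ring1

lemma negAddY_vc (x₁ x₂ y₁ L : F) :
    (C • W).toAffine.negAddY (vvx C x₁) (vvx C x₂) (vvy C x₁ y₁)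
      ((C.u⁻¹ : Fˣ) * (L - C.s)) = vvy C (W.addX x₁ x₂ L) (W.negAddY x₁ x₂ y₁ L) := by
  simp only [negAddY, addX, vvx, vvy, variableChange_a₁, variableChange_a₂]
  ring1

lemma addY_vc (x₁ x₂ y₁ L : F) :
    (C • W).toAffine.addY (vvx C x₁) (vvx C x₂) (vvy C x₁ y₁)
      ((C.u⁻¹ : Fˣ) * (L - C.s)) = vvy C (W.addX x₁ x₂ L) (W.toAffine.addY x₁ x₂ y₁ L) := by
  rw [addY, addX_vc, negAddY_vc, negY_vc]
  rfl

end WeierstrassCurve.Affine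

namespace WeierstrassCurve.Affine

variable {F : Type*} [Field F] [DecidableEq F] {W : WeierstrassCurve.Affine F} (C : WeierstrassCurve.VariableChange F)

lemma equation_vc {x y : F} (h : W.Equation x y) :
    (C • W).toAffine.Equation (vvx C x) (vvy C x y) := by
  rw [Equation, evalEval_polynomial_vc, h, mul_zero]

lemma nonsingular_vc {x y : F} (h : W.Nonsingular x y) :
    (C • W).toAffine.Nonsingular (vvx C x) (vvy C x y) := by
  obtain ⟨he, hd⟩ := h
  refine ⟨equation_vc C he, ?_⟩
  by_cases hY : W.polynomialY.evalEval x y = 0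
  · left
    rw [evalEval_polynomialX_vc, hY, mul_zero, add_zero]
    exact mul_ne_zero (pow_ne_zero 4 C.u⁻¹.ne_zero) (hd.resolve_right (by simp [hY]))
  · right
    rw [evalEval_polynomialY_vc]
    exact mul_ne_zero (pow_ne_zero 3 C.u⁻¹.ne_zero) hY

lemma negY_ne_vc {x₁ x₂ y₁ y₂ : F} (hx : x₁ = x₂) (hy : y₁ ≠ W.negY x₂ y₂) :
    vvy C x₁ y₁ ≠ (C • W).toAffine.negY (vvx C x₂) (vvy C x₂ y₂) := by
  subst hx
  rw [negY_vc]
  exact fun hh => hy ((vvy_eq_iff C).mp hh)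

lemma slope_vc {x₁ x₂ y₁ y₂ : F} (h₁ : W.Equation x₁ y₁) (h₂ : W.Equation x₂ y₂)
    (hxy : x₁ = x₂ → y₁ ≠ W.negY x₂ y₂) :
    (C • W).toAffine.slope (vvx C x₁) (vvx C x₂) (vvy C x₁ y₁) (vvy C x₂ y₂) =
      (C.u⁻¹ : Fˣ) * (W.slope x₁ x₂ y₁ y₂ - C.s) := by
  by_cases hx : x₁ = x₂
  · subst hx
    have hy := hxy rfl
    obtain rfl : y₁ = y₂ := Y_eq_of_Y_ne h₁ h₂ rfl hy
    have hYne : W.polynomialY.evalEval x₁ y₁ ≠ 0 := by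
      rw [evalEval_polynomialY]
      intro hh
      exact hy (by rw [negY]; linear_combination hh)
    rw [slope_of_Y_ne_eq_evalEval rfl (negY_ne_vc C rfl hy), slope_of_Y_ne_eq_evalEval rfl hy,
      evalEval_polynomialX_vc, evalEval_polynomialY_vc, Units.val_inv_eq_inv_val]
    have hu : (C.u : F) ≠ 0 := C.u.ne_zero
    field_simp
    ring
  · have hx' : vvx C x₁ ≠ vvx C x₂ := fun h => hx ((vvx_eq_iff C).mp h)
    rw [slope_of_X_ne hx', slope_of_X_ne hx, vvx, vvx, vvy, vvy, Units.val_inv_eq_inv_val]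
    have hu : (C.u : F) ≠ 0 := C.u.ne_zero
    have hxs : x₁ - x₂ ≠ 0 := sub_ne_zero.mpr hx
    field_simp
    rw [show x₁ - C.r - (x₂ - C.r) = x₁ - x₂ by ring, mul_div_assoc, div_self hxs]
    ring

/-- The group homomorphism on points induced by a variable change. -/
noncomputable def vcHom : W.Point →+ (C • W).toAffine.Point where
  toFun P := match P with
    | .zero => 0
    | .some _ _ h => .some _ _ (nonsingular_vc C h)
  map_zero' := rfl
  map_add' := by
    rintro (_ | @⟨x₁, y₁, h₁⟩) (_ | @⟨x₂, y₂, h₂⟩)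
    any_goals rfl
    by_cases hc : x₁ = x₂ ∧ y₁ = W.negY x₂ y₂
    · rw [Point.add_of_Y_eq hc.1 hc.2]
      rw [Point.add_of_Y_eq (by rw [hc.1]) (by rw [hc.1, hc.2, negY_vc])]
    · have hxy : x₁ = x₂ → y₁ ≠ W.negY x₂ y₂ := fun hx hy => hc ⟨hx, hy⟩
      have hxy' : vvx C x₁ = vvx C x₂ →
          vvy C x₁ y₁ ≠ (C • W).toAffine.negY (vvx C x₂) (vvy C x₂ y₂) :=
        fun hx => negY_ne_vc C ((vvx_eq_iff C).mp hx) (hxy ((vvx_eq_iff C).mp hx))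
      rw [Point.add_some (fun h => hxy h.1 h.2)]
      rw [Point.add_some (fun h => hxy' h.1 h.2)]
      simp only [Point.some.injEq]
      constructor
      · rw [slope_vc C h₁.1 h₂.1 hxy, addX_vc]
      · rw [slope_vc C h₁.1 h₂.1 hxy, addY_vc]

lemma vcHom_injective : Function.Injective (vcHom (W := W) C) := by
  rintro (_ | @⟨x₁, y₁, h₁⟩) (_ | @⟨x₂, y₂, h₂⟩) h
  any_goals contradiction
  · rfl
  · simp only [vcHom, AddMonoidHom.coe_mk, ZeroHom.coe_mk, Point.some.injEq] at h
    obtain rfl : x₁ = x₂ := (vvx_eq_iff C).mp h.1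
    obtain rfl : y₁ = y₂ := (vvy_eq_iff C).mp h.2
    rfl

end WeierstrassCurve.Affine

namespace WeierstrassCurve.Affine

variable {F : Type*} [Field F] [DecidableEq F] {K : Type*} [Field K] [DecidableEq K] {W : WeierstrassCurve.Affine F} (f : F →+* K)

/-- The group homomorphism on points induced by an injective ring homomorphism. -/
noncomputable def mapHom : W.Point →+ (W.map f).toAffine.Point where
  toFun P := match P with
    | .zero => 0
    | .some _ _ h => .some _ _ ((W.map_nonsingular f.injective _ _).mpr h)
  map_zero' := rfl
  map_add' := by
    rintro (_ | @⟨x₁, y₁, h₁⟩) (_ | @⟨x₂, y₂, h₂⟩)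
    any_goals rfl
    by_cases hc : x₁ = x₂ ∧ y₁ = W.negY x₂ y₂
    · rw [Point.add_of_Y_eq hc.1 hc.2]
      rw [Point.add_of_Y_eq (by rw [hc.1]) (by rw [map_negY, hc.2])]
    · have hxy : x₁ = x₂ → y₁ ≠ W.negY x₂ y₂ := fun hx hy => hc ⟨hx, hy⟩
      have hxy' : f x₁ = f x₂ →
          f y₁ ≠ (W.map f).toAffine.negY (f x₂) (f y₂) := by
        intro hx hy
        rw [map_negY] at hy
        exact hxy (f.injective hx) (f.injective hy)
      rw [Point.add_some (fun h => hxy h.1 h.2), Point.add_some (fun h => hxy' h.1 h.2)]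
      simp only [Point.some.injEq]
      constructor
      · rw [map_slope, map_addX]
      · rw [map_slope, map_addY]

lemma mapHom_injective : Function.Injective (mapHom (W := W) f) := by
  rintro (_ | @⟨x₁, y₁, h₁⟩) (_ | @⟨x₂, y₂, h₂⟩) h
  any_goals contradiction
  · rfl
  · simp only [mapHom, AddMonoidHom.coe_mk, ZeroHom.coe_mk, Point.some.injEq] at h
    obtain rfl : x₁ = x₂ := f.injective h.1
    obtain rfl : y₁ = y₂ := f.injective h.2
    rfl

end WeierstrassCurve.Affine

open Classical in
open WeierstrassCurve.Affine in
theorem supersingular_of_j_frobenius' (p : ℕ) [Fact p.Prime] (hp : 3 < p)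
    (E E' : WeierstrassCurve (AlgebraicClosure (ZMod p))) [E.IsElliptic] [E'.IsElliptic]
    (hj : E'.j = E.j ^ p) (hE : ∀ P : E.toAffine.Point, addOrderOf P ≠ p) :
    ∀ P : E'.toAffine.Point, addOrderOf P ≠ p := by
  let K := AlgebraicClosure (ZMod p)
  let φ : K ≃+* K := frobeniusEquiv K p
  have hj' : (E.map (φ : K →+* K)).j = E'.j := by
    rw [map_j, hj]
    rfl
  obtain ⟨C, hC⟩ := WeierstrassCurve.exists_variableChange_of_j_eq (E.map (φ : K →+* K)) E' hj'
  intro P hP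
  have key : ∀ (W W' : WeierstrassCurve K), W = W' →
      (∃ Q : W.toAffine.Point, addOrderOf Q = p) →
      ∃ Q : W'.toAffine.Point, addOrderOf Q = p := by
    rintro W W' rfl h; exact h
  have h2 : C⁻¹ • E' = E.map (φ : K →+* K) := by
    rw [← hC, inv_smul_smul]
  have h3 : (E.map (φ : K →+* K)).map (φ.symm : K →+* K) = E := by
    rw [WeierstrassCurve.map_map]
    have : ((φ.symm : K →+* K)).comp (φ : K →+* K) = RingHom.id K := by
      ext x; simp
    rw [this, WeierstrassCurve.map_id]
  have hA : ∃ Q : (C⁻¹ • E').toAffine.Point, addOrderOf Q = p :=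
    ⟨vcHom C⁻¹ P, by rw [addOrderOf_injective _ (vcHom_injective C⁻¹) P]; exact hP⟩
  obtain ⟨Q, hQ⟩ := key _ _ h2 hA
  have hCc : ∃ Q : ((E.map (φ : K →+* K)).map (φ.symm : K →+* K)).toAffine.Point,
      addOrderOf Q = p :=
    ⟨mapHom (φ.symm : K →+* K) Q,
      by rw [addOrderOf_injective _ (mapHom_injective (φ.symm : K →+* K)) Q]; exact hQ⟩
  obtain ⟨R, hR⟩ := key _ _ h3 hCc
  exact hE R hR

/-- For `p > 3` prime, if `E` and `E'` are elliptic curves over the algebraic closure of `𝔽_p`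
with `j(E') = j(E)^p` and `E` is supersingular, then so is `E'`.  Hence Frobenius
`j ↦ j^p` is an involution on the set of supersingular `j`-invariants. -/
theorem supersingular_of_j_frobenius (p : ℕ) [Fact p.Prime] (hp : 3 < p)
    (E E' : WeierstrassCurve (AlgebraicClosure (ZMod p))) [E.IsElliptic] [E'.IsElliptic]
    (hj : E'.j = E.j ^ p) (hE : Supersingular p E) : Supersingular p E' := by
  exact supersingular_of_j_frobenius' p hp E E' hj hE
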